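/- Let λ be an infinite set, N ∈ ℕ, and c : λ → Fin N a coloring. Let F = {a ∈ λ : c⁻¹(c(a)) is finite}. Suppose Y ⊆ λ^k is mutually algebraic and is invariant under every color-preserving bijection of λ, i.e., for every bijection σ : λ → λ with c ∘ σ = c and every tuple ā ∈ λ^k, ā ∈ Y if and only if σ ∘ ā ∈ Y. Then Y ⊆ F^k ∪ Δ_k. -/

import Mathlib

open FirstOrder

/-- `Y ⊆ λ^k` is mutually algebraic if there is `m` such that every `a ∈ λ` occurs as a
coordinate of at most `m` tuples of `Y`. -/
def MutuallyAlgebraic {lam : Type*} {k : ℕ} (Y : Set (Fin k → lam)) : Prop :=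
  ∃ m : ℕ, ∀ a : lam,
    {x ∈ Y | ∃ i, x i = a}.Finite ∧ {x ∈ Y | ∃ i, x i = a}.ncard ≤ m

/-- `Δ_k`, the set of constant `k`-tuples. -/
def Delta (lam : Type*) (k : ℕ) : Set (Fin k → lam) := {x | ∀ i j, x i = x j}

theorem stmt1 {lam : Type*} [Infinite lam] {N k : ℕ} (c : lam → Fin N)
    {Y : Set (Fin k → lam)} (hY : MutuallyAlgebraic Y)
    (hinv : ∀ σ : Equiv.Perm lam, c ∘ σ = c →
      ∀ x : Fin k → lam, x ∈ Y ↔ (σ ∘ x) ∈ Y) :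
    Y ⊆ {x | ∀ i, x i ∈ {a : lam | (c ⁻¹' {c a}).Finite}} ∪ Delta lam k := by
  intro x hx
  by_contra hmem
  simp only [Set.mem_union, Set.mem_setOf_eq, Delta, not_or, not_forall] at hmem
  obtain ⟨⟨i₀, hinf⟩, hnc⟩ := hmem
  push_neg at hnc
  obtain ⟨i, j, hij⟩ := hnc
  obtain ⟨j', hj'⟩ : ∃ j', x j' ≠ x i₀ := by
    by_cases h : x i = x i₀
    · exact ⟨j, fun e => hij (h.trans e.symm)⟩
    · exact ⟨i, h⟩
  set a := x i₀ with ha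
  set b := x j' with hb
  have hinf' : (c ⁻¹' {c a}).Infinite := hinf
  have hS : ((c ⁻¹' {c a}) \ Set.range x).Infinite := hinf'.diff (Set.finite_range x)
  have : DecidableEq lam := Classical.decEq lam
  obtain ⟨m, hm⟩ := hY
  have hinj : Set.InjOn (fun a' => (Equiv.swap a a') ∘ x) ((c ⁻¹' {c a}) \ Set.range x) := by
    intro a' _ a'' _ he
    have h1 := congrFun he i₀
    simpa [← ha, Equiv.swap_apply_left] using h1
  have hsub : (fun a' => (Equiv.swap a a') ∘ x) '' ((c ⁻¹' {c a}) \ Set.range x) ⊆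
      {y ∈ Y | ∃ i, y i = b} := by
    rintro _ ⟨a', ⟨hc, hr⟩, rfl⟩
    have hca : c a' = c a := hc
    have hσ : c ∘ (Equiv.swap a a') = c := by
      funext z
      rcases eq_or_ne z a with rfl | hz1
      · simpa [Equiv.swap_apply_left] using hca
      · rcases eq_or_ne z a' with rfl | hz2
        · simpa [Equiv.swap_apply_right] using hca.symm
        · simp [Equiv.swap_apply_of_ne_of_ne hz1 hz2]
    refine ⟨(hinv (Equiv.swap a a') hσ x).mp hx, j', ?_⟩
    have hb1 : x j' ≠ a := hj'
    have hb2 : x j' ≠ a' := fun e => hr ⟨j', e⟩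
    simp [Equiv.swap_apply_of_ne_of_ne hb1 hb2]
    rfl
  exact ((hS.image hinj).mono hsub) (hm b).1
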